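/- arXiv:1206.2420 — 2 statements merged into one kernel-verified Lean document; each statement's English description precedes it below -/
import Mathlib

section
/- Let p be a prime and let s be a rational prime, s ≠ p, such that s is not a p-th power modulo p². Let ζ be a primitive p-th root of unity, k = ℚ(ζ), and q a prime with q ≡ 1 (mod p²). Define τ₁(s), τ₂(s), τ₃(s) as the gcd of the inertia degrees of primes above s in the extensions K₁ = k(ζ^{1/p}), K₂ = k(q^{1/p}), K₃ = k((ζq)^{1/p}) respectively. Then at most one of τ₁(s), τ₂(s), τ₃(s) is prime to p. -/
set_option synthInstance.maxHeartbeats 400000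
set_option maxHeartbeats 1000000

open NumberField

/-- `TauCoprime p K s` says that the gcd `τ(s)` of the inertia degrees of the
primes of the number field `K` above the rational prime `s` is coprime to the
prime `p`.  (Since `p` is prime, this holds iff some prime of `K` above `s` has
inertia degree not divisible by `p`.) -/
def TauCoprime (p : ℕ) (K : Type*) [Field K] [NumberField K] (s : ℕ) : Prop :=
  ∃ P : Ideal (𝓞 K), P.IsMaximal ∧ (s : 𝓞 K) ∈ P ∧
    ¬ p ∣ Ideal.inertiaDeg' (Ideal.span {(s : ℤ)}) P


-- Lemma B: if s^f ≡ 1 mod p² and p ∤ f, then s is a p-th power mod p².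
lemma lemB {p s f : ℕ} (hp : p.Prime) (hf : ¬ p ∣ f)
    (h1 : (s : ZMod (p ^ 2)) ^ f = 1) :
    ∃ t : ℕ, t ^ p % p ^ 2 = s % p ^ 2 := by
  set x : ZMod (p ^ 2) := (s : ZMod (p ^ 2)) with hx
  set d := orderOf x with hd
  have hdf : d ∣ f := orderOf_dvd_of_pow_eq_one h1
  have hpd : ¬ p ∣ d := fun h => hf (h.trans hdf)
  have hcop : Nat.Coprime p d := (Nat.Prime.coprime_iff_not_dvd hp).mpr hpd
  have hd0 : d ≠ 0 := by
    rintro h0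
    rw [h0] at hdf
    exact hf ((zero_dvd_iff.mp hdf) ▸ dvd_zero p)
  have htot : 1 ≤ Nat.totient d := Nat.totient_pos.mpr (Nat.pos_of_ne_zero hd0)
  set e := p ^ (Nat.totient d - 1) with he
  have hpe : p * e = p ^ Nat.totient d := by
    rw [he, ← pow_succ']
    congr 1
    omega
  have hmod : p ^ Nat.totient d ≡ 1 [MOD d] := Nat.ModEq.pow_totient hcop
  have hge : 1 ≤ p ^ Nat.totient d := Nat.one_le_pow _ _ hp.pos
  have hdd : d ∣ p ^ Nat.totient d - 1 := (Nat.modEq_iff_dvd' hge).mp hmod.symm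
  obtain ⟨m, hm⟩ := hdd
  have hpm : p * e = 1 + d * m := by omega
  have key : ((s ^ e : ℕ) : ZMod (p ^ 2)) ^ p = x := by
    push_cast
    rw [← pow_mul, mul_comm e p, hpm, pow_add, pow_one, pow_mul]
    show x * (x ^ d) ^ m = x
    rw [hd, pow_orderOf_eq_one, one_pow, mul_one]
  refine ⟨s ^ e, ?_⟩
  have : (((s ^ e) ^ p : ℕ) : ZMod (p ^ 2)) = (s : ZMod (p ^ 2)) := by push_cast; push_cast at key; exact key
  exact (ZMod.natCast_eq_natCast_iff _ _ _).mp this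

-- Lemma C: equal p-valuations
lemma lemC {p x g : ℕ} (hp : p.Prime) (hx : 2 ≤ x) (hg : ¬ p ∣ g)
    (h1 : p ∣ x - 1) :
    (x ^ g - 1).factorization p = (x - 1).factorization p := by
  have hg0 : g ≠ 0 := fun h => hg (h ▸ dvd_zero p)
  set S : ℕ := ∑ i ∈ Finset.range g, x ^ i with hS
  have hkey : x ^ g - 1 = (x - 1) * S := by
    have h2 : ((x : ℤ) - 1) * (S : ℤ) = (x : ℤ) ^ g - 1 := by
      rw [hS]
      push_cast
      rw [mul_comm]
      exact geom_sum_mul (x : ℤ) g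
    have hx1 : 1 ≤ x ^ g := Nat.one_le_pow _ _ (by omega)
    have : ((x ^ g - 1 : ℕ) : ℤ) = (((x - 1) * S : ℕ) : ℤ) := by
      rw [Nat.cast_sub hx1, Nat.cast_mul, Nat.cast_sub (by omega : 1 ≤ x)]
      push_cast
      linarith [h2]
    exact_mod_cast this
  have hpS : ¬ p ∣ S := by
    intro hdvd
    have : (S : ZMod p) = 0 := (ZMod.natCast_eq_zero_iff _ _).mpr hdvd
    rw [hS] at this
    push_cast at this
    have hx1 : ((x : ℕ) : ZMod p) = 1 := by
      obtain ⟨c, hc⟩ := h1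
      have : x = 1 + p * c := by omega
      rw [this]; push_cast; simp
    rw [hx1] at this
    simp only [one_pow, Finset.sum_const, Finset.card_range, nsmul_eq_mul, mul_one] at this
    exact hg ((ZMod.natCast_eq_zero_iff _ _).mp this)
  have hS0 : S ≠ 0 := fun h => hpS (h ▸ dvd_zero p)
  have hx10 : x - 1 ≠ 0 := by omega
  rw [hkey, Nat.factorization_mul hx10 hS0]
  simp [Nat.factorization_eq_zero_of_not_dvd hpS]

-- order of element in units gives divisibility of card - 1
lemma ord_dvd_card_sub_one {F : Type*} [Field F] [Fintype F] {y : F} (hy : y ≠ 0) :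
    orderOf y ∣ Fintype.card F - 1 := by
  have h1 : orderOf (Units.mk0 y hy) ∣ Nat.card Fˣ := orderOf_dvd_natCard _
  rw [Nat.card_units, Nat.card_eq_fintype_card] at h1
  rwa [← orderOf_units] at h1

lemma ordp2 {F : Type*} [Field F] [Fintype F] {p : ℕ} (hp : p.Prime) {y : F}
    (hy : IsPrimitiveRoot (y ^ p) p) : p ^ 2 ∣ Fintype.card F - 1 := by
  have hyp0 : (y : F) ^ p ≠ 0 := hy.ne_zero hp.ne_zero
  have hy0 : y ≠ 0 := fun h => hyp0 (by rw [h]; exact zero_pow hp.ne_zero)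
  have hord : orderOf (y ^ p) = p := hy.eq_orderOf.symm
  rw [orderOf_pow' y hp.ne_zero] at hord
  have hpn : p ∣ orderOf y := by
    by_contra hpn
    have hgcd : Nat.gcd (orderOf y) p = 1 := (Nat.coprime_comm.mp ((hp.coprime_iff_not_dvd).mpr hpn))
    rw [hgcd, Nat.div_one] at hord
    exact hpn (hord ▸ dvd_refl p)
  have hgcd : Nat.gcd (orderOf y) p = p := Nat.gcd_eq_right hpn
  rw [hgcd] at hord
  have hn : orderOf y = p ^ 2 := by
    have := Nat.eq_mul_of_div_eq_right hpn hord
    rw [this]; ring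
  exact hn ▸ ord_dvd_card_sub_one hy0

lemma cast_eq_one_of_dvd {n m : ℕ} (h : n ∣ m - 1) (hm : 1 ≤ m) : ((m : ℕ) : ZMod n) = 1 := by
  obtain ⟨c, hc⟩ := h
  have : m = 1 + n * c := by omega
  rw [this]; push_cast; simp

lemma conclude {p s f : ℕ} (hp : p.Prime) (hs : s.Prime) (hf : ¬ p ∣ f)
    (h : p ^ 2 ∣ s ^ f - 1) : ∃ t : ℕ, t ^ p % p ^ 2 = s % p ^ 2 := by
  apply lemB hp hf
  have h1 : ((s ^ f : ℕ) : ZMod (p ^ 2)) = 1 :=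
    cast_eq_one_of_dvd h (Nat.one_le_pow _ _ hs.pos)
  push_cast at h1
  exact h1
lemma extract {K : Type*} [Field K] [NumberField K] {p s : ℕ} (hs : s.Prime)
    (h : TauCoprime p K s) :
    ∃ P : Ideal (𝓞 K), P.IsMaximal ∧ (s : 𝓞 K) ∈ P ∧
      ∃ (_ : Fintype (𝓞 K ⧸ P)) (f : ℕ), ¬ p ∣ f ∧ Fintype.card (𝓞 K ⧸ P) = s ^ f := by
  obtain ⟨P, hP, hsP, hdvd⟩ := h
  have hmax : (Ideal.span {(s : ℤ)}).IsMaximal := by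
    apply PrincipalIdealRing.isMaximal_of_irreducible
    exact (Nat.prime_iff_prime_int.mp hs).irreducible
  have hle : Ideal.span {(s : ℤ)} ≤ Ideal.comap (Int.castRingHom (𝓞 K)) P := by
    rw [Ideal.span_le, Set.singleton_subset_iff]
    show (Int.castRingHom (𝓞 K)) (s : ℤ) ∈ P
    simpa using hsP
  have hne : Ideal.comap (Int.castRingHom (𝓞 K)) P ≠ ⊤ := by
    intro htop
    apply hP.ne_top
    rw [Ideal.eq_top_iff_one] at htop ⊢
    simpa using htop
  have hcomap : Ideal.comap (Int.castRingHom (𝓞 K)) P = Ideal.span {(s : ℤ)} :=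
    (hmax.eq_of_le hne hle).symm
  letI : Field (ℤ ⧸ Ideal.span {(s : ℤ)}) := Ideal.Quotient.field _
  letI : Algebra (ℤ ⧸ Ideal.span {(s : ℤ)}) (𝓞 K ⧸ P) :=
    Ideal.Quotient.algebraQuotientOfLEComap (le_of_eq hcomap.symm)
  have hID : Ideal.inertiaDeg' (Ideal.span {(s : ℤ)}) P
      = Module.finrank (ℤ ⧸ Ideal.span {(s : ℤ)}) (𝓞 K ⧸ P) := dif_pos hcomap
  have hPbot : P ≠ ⊥ := by
    intro hbot
    rw [hbot] at hsP
    have : (s : 𝓞 K) = 0 := hsP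
    have : (s : K) = 0 := by exact_mod_cast congrArg (algebraMap (𝓞 K) K) this
    exact hs.ne_zero (by exact_mod_cast this)
  letI : Fintype (𝓞 K ⧸ P) := @Fintype.ofFinite _ (Ideal.finiteQuotientOfFreeOfNeBot P hPbot)
  haveI : NeZero s := ⟨hs.ne_zero⟩
  letI : Fintype (ℤ ⧸ Ideal.span {(s : ℤ)}) :=
    Fintype.ofEquiv (ZMod s) (Int.quotientSpanNatEquivZMod s).symm.toEquiv
  have hcardbase : Fintype.card (ℤ ⧸ Ideal.span {(s : ℤ)}) = s :=
    (Fintype.card_congr (Int.quotientSpanNatEquivZMod s).toEquiv).trans (ZMod.card s)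
  refine ⟨P, hP, hsP, inferInstance, Module.finrank (ℤ ⧸ Ideal.span {(s : ℤ)}) (𝓞 K ⧸ P),
    by rwa [hID] at hdvd, ?_⟩
  have hcf := Module.card_eq_pow_finrank (K := ℤ ⧸ Ideal.span {(s : ℤ)}) (V := 𝓞 K ⧸ P)
  rw [hcardbase] at hcf
  exact hcf

open Polynomial in

lemma primroot_quot {K : Type*} [Field K] [NumberField K] {p s : ℕ} (hp : p.Prime)
    (hs : s.Prime) (hsp : s ≠ p) {F : Type*} [Field F] (φ : 𝓞 K →+* F)
    (hsF : ((s : ℕ) : F) = 0) {z : 𝓞 K}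
    (hz : IsPrimitiveRoot (algebraMap (𝓞 K) K z) p) :
    IsPrimitiveRoot (φ z) p := by
  have hcharF : ringChar F = s := CharP.ringChar_of_prime_eq_zero hs hsF
  haveI : NeZero (p : F) := by
    constructor
    intro hpF
    have h1 : ringChar F ∣ p := ringChar.dvd hpF
    rw [hcharF] at h1
    exact hsp ((Nat.prime_dvd_prime_iff_eq hs hp).mp h1)
  have h0 : Polynomial.eval (algebraMap (𝓞 K) K z) (cyclotomic p K) = 0 :=
    hz.isRoot_cyclotomic hp.pos
  have h1 : Polynomial.eval z (cyclotomic p (𝓞 K)) = 0 := by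
    apply IsFractionRing.injective (𝓞 K) K
    rw [map_zero, ← Polynomial.eval₂_hom, ← Polynomial.eval_map, Polynomial.map_cyclotomic]
    exact h0
  have h2 : Polynomial.IsRoot (cyclotomic p F) (φ z) := by
    rw [Polynomial.IsRoot.def, ← Polynomial.map_cyclotomic _ φ, Polynomial.eval_map,
      Polynomial.eval₂_hom, h1, map_zero]
  exact (Polynomial.isRoot_cyclotomic_iff).mp h2

lemma part23 {p s q f₂ f₃ : ℕ} (hp : p.Prime) (hs : s.Prime)
    {F₂ : Type*} [Field F₂] [Fintype F₂] {F₃ : Type*} [Field F₃] [Fintype F₃]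
    (hcard₂ : Fintype.card F₂ = s ^ f₂) (hcard₃ : Fintype.card F₃ = s ^ f₃)
    (hf₂ : ¬ p ∣ f₂) (hf₃ : ¬ p ∣ f₃)
    (hchar₂ : ((s : ℕ) : F₂) = 0) (hchar₃ : ((s : ℕ) : F₃) = 0)
    {z₂ : F₂} (hz₂ : IsPrimitiveRoot z₂ p) {z₃ : F₃} (hz₃ : IsPrimitiveRoot z₃ p)
    {x₂ : F₂} (hx₂ : x₂ ^ p = (q : F₂)) {x₃ : F₃} (hx₃ : x₃ ^ p = z₃ * (q : F₃))
    (hq₂ : (q : F₂) ≠ 0) (hq₃ : (q : F₃) ≠ 0) :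
    p ^ 2 ∣ s ^ f₃ - 1 := by
  set N₂ := s ^ f₂ - 1 with hN₂
  set N₃ := s ^ f₃ - 1 with hN₃
  have hf₂0 : f₂ ≠ 0 := fun h => hf₂ (h ▸ dvd_zero p)
  have hf₃0 : f₃ ≠ 0 := fun h => hf₃ (h ▸ dvd_zero p)
  have h2f₂ : 2 ≤ s ^ f₂ := le_trans hs.two_le (Nat.le_self_pow hf₂0 s)
  have h2f₃ : 2 ≤ s ^ f₃ := le_trans hs.two_le (Nat.le_self_pow hf₃0 s)
  have hN₂0 : N₂ ≠ 0 := by omega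
  have hN₃0 : N₃ ≠ 0 := by omega
  have hcard₂' : Fintype.card F₂ - 1 = N₂ := by rw [hcard₂]
  have hcard₃' : Fintype.card F₃ - 1 = N₃ := by rw [hcard₃]
  -- p divides N₂ and N₃
  have hz₂0 : z₂ ≠ 0 := hz₂.ne_zero hp.ne_zero
  have hz₃0 : z₃ ≠ 0 := hz₃.ne_zero hp.ne_zero
  have hpN₂ : p ∣ N₂ := by
    have := ord_dvd_card_sub_one hz₂0
    rwa [← hz₂.eq_orderOf, hcard₂'] at this
  have hpN₃ : p ∣ N₃ := by
    have := ord_dvd_card_sub_one hz₃0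
    rwa [← hz₃.eq_orderOf, hcard₃'] at this
  -- q is a p-th power in F₂, hence q^(N₂/p) = 1 in F₂
  have hx₂0 : x₂ ≠ 0 := by
    intro h; rw [h, zero_pow hp.ne_zero] at hx₂; exact hq₂ hx₂.symm
  have e₂ : ((q : ℕ) : F₂) ^ (N₂ / p) = 1 := by
    rw [← hx₂, ← pow_mul, Nat.mul_div_cancel' hpN₂, ← hcard₂']
    exact FiniteField.pow_card_sub_one_eq_one x₂ hx₂0
  -- transfer to F₃ via ZMod s
  haveI : Fact s.Prime := ⟨hs⟩
  haveI hc₂ : CharP F₂ s := (CharP.charP_iff_prime_eq_zero hs).mpr hchar₂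
  haveI hc₃ : CharP F₃ s := (CharP.charP_iff_prime_eq_zero hs).mpr hchar₃
  have hqz : ((q : ℕ) : ZMod s) ^ (N₂ / p) = 1 := by
    apply (ZMod.castHom (dvd_refl s) F₂).injective
    rw [map_pow, map_natCast, map_one]
    exact e₂
  have e₃ : ((q : ℕ) : F₃) ^ (N₂ / p) = 1 := by
    have := congrArg (ZMod.castHom (dvd_refl s) F₃) hqz
    rwa [map_pow, map_natCast, map_one] at this
  -- order of q in F₃
  set D := orderOf ((q : ℕ) : F₃) with hD
  have hD2 : D ∣ N₂ / p := orderOf_dvd_of_pow_eq_one e₃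
  have hD3 : D ∣ N₃ := by
    apply orderOf_dvd_of_pow_eq_one
    rw [← hcard₃']
    exact FiniteField.pow_card_sub_one_eq_one _ hq₃
  have hD0 : D ≠ 0 := fun h => hN₃0 (zero_dvd_iff.mp (h ▸ hD3))
  have hN₂p0 : N₂ / p ≠ 0 :=
    (Nat.div_pos (Nat.le_of_dvd (Nat.pos_of_ne_zero hN₂0) hpN₂) hp.pos).ne'
  have hN₃p0 : N₃ / p ≠ 0 := (Nat.div_pos (Nat.le_of_dvd (Nat.pos_of_ne_zero hN₃0) hpN₃) hp.pos).ne'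
  -- equal p-adic valuations of N₂ and N₃
  have hv : N₂.factorization p = N₃.factorization p := by
    have hA := lemC hp h2f₂ hf₃ hpN₂
    have hB := lemC hp h2f₃ hf₂ hpN₃
    rw [← pow_mul] at hA hB
    rw [mul_comm f₂ f₃] at hA
    exact (hA.symm.trans hB).symm ▸ rfl
  -- D divides N₃ / p
  have hD3p : D ∣ N₃ / p := by
    rw [← Nat.factorization_le_iff_dvd hD0 hN₃p0, Nat.factorization_div hpN₃,
      hp.factorization]
    rw [Finsupp.le_def]
    intro r
    rw [Finsupp.tsub_apply]
    by_cases hr : r = p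
    · rw [hr, Finsupp.single_eq_same]
      have h1 : D.factorization p ≤ (N₂ / p).factorization p :=
        Finsupp.le_def.mp ((Nat.factorization_le_iff_dvd hD0 hN₂p0).mpr hD2) p
      have h2 : (N₂ / p).factorization p = N₂.factorization p - 1 := by
        rw [Nat.factorization_div hpN₂, hp.factorization, Finsupp.tsub_apply,
          Finsupp.single_eq_same]
      omega
    · rw [Finsupp.single_eq_of_ne' (Ne.symm hr), Nat.sub_zero]
      exact Finsupp.le_def.mp ((Nat.factorization_le_iff_dvd hD0 hN₃0).mpr hD3) r
  -- hence q^(N₃/p) = 1 in F₃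
  have e₄ : ((q : ℕ) : F₃) ^ (N₃ / p) = 1 := orderOf_dvd_iff_pow_eq_one.mp hD3p
  -- and z₃^(N₃/p) = 1
  have hx₃0 : x₃ ≠ 0 := by
    intro h
    rw [h, zero_pow hp.ne_zero] at hx₃
    exact mul_ne_zero hz₃0 hq₃ hx₃.symm
  have e₅ : (z₃ * ((q : ℕ) : F₃)) ^ (N₃ / p) = 1 := by
    rw [← hx₃, ← pow_mul, Nat.mul_div_cancel' hpN₃, ← hcard₃']
    exact FiniteField.pow_card_sub_one_eq_one x₃ hx₃0
  rw [mul_pow, e₄, mul_one] at e₅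
  have hpN₃p : p ∣ N₃ / p := by
    have := orderOf_dvd_of_pow_eq_one e₅
    rwa [← hz₃.eq_orderOf] at this
  obtain ⟨c, hc⟩ := hpN₃p
  have : N₃ = p * (N₃ / p) := (Nat.mul_div_cancel' hpN₃).symm
  rw [hc] at this
  exact ⟨c, by rw [this]; ring⟩

/-- Let `p` be a prime and `s ≠ p` a rational prime which is not a
`p`-th power modulo `p²`.  Let `ζ` be a primitive `p`-th root of unity,
`k = ℚ(ζ)`, and `q ≡ 1 (mod p²)` a prime.  Let `K₁ = k(ζ^{1/p})`,
`K₂ = k(q^{1/p})`, `K₃ = k((ζq)^{1/p})`, and let `τᵢ(s)` be the gcd of the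
inertia degrees of the primes above `s` in `Kᵢ`.  Then at most one of `τ₁(s)`,
`τ₂(s)`, `τ₃(s)` is prime to `p`. -/
theorem stmt_3 (p s q : ℕ) (hp : p.Prime) (hs : s.Prime) (hsp : s ≠ p)
    (hspow : ¬ ∃ t : ℕ, t ^ p % p ^ 2 = s % p ^ 2)
    (hq : q.Prime) (hq1 : q % p ^ 2 = 1)
    (ζ : CyclotomicField p ℚ) (hζ : IsPrimitiveRoot ζ p)
    (K₁ K₂ K₃ : Type*) [Field K₁] [Field K₂] [Field K₃]
    [NumberField K₁] [NumberField K₂] [NumberField K₃]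
    [Algebra (CyclotomicField p ℚ) K₁]
    [Algebra (CyclotomicField p ℚ) K₂]
    [Algebra (CyclotomicField p ℚ) K₃]
    (a₁ : K₁) (ha₁ : a₁ ^ p = algebraMap _ K₁ ζ)
    (hgen₁ : Algebra.adjoin (CyclotomicField p ℚ) ({a₁} : Set K₁) = ⊤)
    (a₂ : K₂) (ha₂ : a₂ ^ p = (q : K₂))
    (hgen₂ : Algebra.adjoin (CyclotomicField p ℚ) ({a₂} : Set K₂) = ⊤)
    (a₃ : K₃) (ha₃ : a₃ ^ p = algebraMap _ K₃ ζ * (q : K₃))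
    (hgen₃ : Algebra.adjoin (CyclotomicField p ℚ) ({a₃} : Set K₃) = ⊤) :
    ¬ (TauCoprime p K₁ s ∧ TauCoprime p K₂ s) ∧
    ¬ (TauCoprime p K₁ s ∧ TauCoprime p K₃ s) ∧
    ¬ (TauCoprime p K₂ s ∧ TauCoprime p K₃ s) := by
  classical
  have hsq : s ≠ q := by
    intro h
    apply hspow
    refine ⟨1, ?_⟩
    have hp2 : 1 < p ^ 2 := by
      have := hp.two_le; nlinarith
    rw [one_pow, h, hq1, Nat.mod_eq_of_lt hp2]
  -- K₁ gives a contradiction on its own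
  have noK₁ : ¬ TauCoprime p K₁ s := by
    intro h
    obtain ⟨P, hP, hsP, inst, f, hpf, hcard⟩ := extract hs h
    letI : Fintype (𝓞 K₁ ⧸ P) := inst
    haveI : P.IsMaximal := hP
    letI : Field (𝓞 K₁ ⧸ P) := Ideal.Quotient.field P
    set φ := Ideal.Quotient.mk P with hφ
    have hsF : ((s : ℕ) : 𝓞 K₁ ⧸ P) = 0 := by
      have h0 : φ ((s : ℕ) : 𝓞 K₁) = 0 := Ideal.Quotient.eq_zero_iff_mem.mpr hsP
      rwa [map_natCast] at h0
    have hζint₁ : IsIntegral ℤ (algebraMap (CyclotomicField p ℚ) K₁ ζ) :=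
      (hζ.isIntegral hp.pos).map
        ((algebraMap (CyclotomicField p ℚ) K₁).toIntAlgHom)
    have ha₁int : IsIntegral ℤ a₁ := IsIntegral.of_pow hp.pos (ha₁ ▸ hζint₁)
    set z : 𝓞 K₁ := ⟨algebraMap (CyclotomicField p ℚ) K₁ ζ, hζint₁⟩ with hzdef
    set α : 𝓞 K₁ := ⟨a₁, ha₁int⟩ with hαdef
    have hαp : α ^ p = z := by
      ext
      rw [NumberField.RingOfIntegers.coe_eq_algebraMap, map_pow]
      exact ha₁
    have hzprim : IsPrimitiveRoot (algebraMap (𝓞 K₁) K₁ z) p :=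
      hζ.map_of_injective (algebraMap (CyclotomicField p ℚ) K₁).injective
    have hprim : IsPrimitiveRoot (φ z) p := primroot_quot hp hs hsp φ hsF hzprim
    have hprim' : IsPrimitiveRoot ((φ α) ^ p) p := by
      rw [← map_pow, hαp]; exact hprim
    have hdvd := ordp2 hp hprim'
    rw [hcard] at hdvd
    exact hspow (conclude hp hs hpf hdvd)
  have no23 : ¬ (TauCoprime p K₂ s ∧ TauCoprime p K₃ s) := by
    rintro ⟨h₂, h₃⟩
    obtain ⟨P₂, hP₂, hsP₂, inst₂, f₂, hpf₂, hcard₂⟩ := extract hs h₂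
    obtain ⟨P₃, hP₃, hsP₃, inst₃, f₃, hpf₃, hcard₃⟩ := extract hs h₃
    letI : Fintype (𝓞 K₂ ⧸ P₂) := inst₂
    letI : Fintype (𝓞 K₃ ⧸ P₃) := inst₃
    haveI : P₂.IsMaximal := hP₂
    haveI : P₃.IsMaximal := hP₃
    letI : Field (𝓞 K₂ ⧸ P₂) := Ideal.Quotient.field P₂
    letI : Field (𝓞 K₃ ⧸ P₃) := Ideal.Quotient.field P₃
    set φ₂ := Ideal.Quotient.mk P₂ with hφ₂
    set φ₃ := Ideal.Quotient.mk P₃ with hφ₃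
    have hsF₂ : ((s : ℕ) : 𝓞 K₂ ⧸ P₂) = 0 := by
      have h0 : φ₂ ((s : ℕ) : 𝓞 K₂) = 0 := Ideal.Quotient.eq_zero_iff_mem.mpr hsP₂
      rwa [map_natCast] at h0
    have hsF₃ : ((s : ℕ) : 𝓞 K₃ ⧸ P₃) = 0 := by
      have h0 : φ₃ ((s : ℕ) : 𝓞 K₃) = 0 := Ideal.Quotient.eq_zero_iff_mem.mpr hsP₃
      rwa [map_natCast] at h0
    have hζint₂ : IsIntegral ℤ (algebraMap (CyclotomicField p ℚ) K₂ ζ) :=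
      (hζ.isIntegral hp.pos).map
        ((algebraMap (CyclotomicField p ℚ) K₂).toIntAlgHom)
    have hζint₃ : IsIntegral ℤ (algebraMap (CyclotomicField p ℚ) K₃ ζ) :=
      (hζ.isIntegral hp.pos).map
        ((algebraMap (CyclotomicField p ℚ) K₃).toIntAlgHom)
    have hqint₂ : IsIntegral ℤ ((q : ℕ) : K₂) := by
      have h0 := isIntegral_algebraMap (R := ℤ) (A := K₂) (x := (q : ℤ))
      rwa [algebraMap_int_eq, eq_intCast, Int.cast_natCast] at h0
    have hqint₃ : IsIntegral ℤ ((q : ℕ) : K₃) := by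
      have h0 := isIntegral_algebraMap (R := ℤ) (A := K₃) (x := (q : ℤ))
      rwa [algebraMap_int_eq, eq_intCast, Int.cast_natCast] at h0
    have ha₂int : IsIntegral ℤ a₂ := IsIntegral.of_pow hp.pos (ha₂ ▸ hqint₂)
    have ha₃int : IsIntegral ℤ a₃ :=
      IsIntegral.of_pow hp.pos (ha₃ ▸ (hζint₃.mul hqint₃))
    set z₂ : 𝓞 K₂ := ⟨algebraMap (CyclotomicField p ℚ) K₂ ζ, hζint₂⟩ with hz₂def
    set z₃ : 𝓞 K₃ := ⟨algebraMap (CyclotomicField p ℚ) K₃ ζ, hζint₃⟩ with hz₃def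
    set α₂ : 𝓞 K₂ := ⟨a₂, ha₂int⟩ with hα₂def
    set α₃ : 𝓞 K₃ := ⟨a₃, ha₃int⟩ with hα₃def
    have hα₂p : α₂ ^ p = ((q : ℕ) : 𝓞 K₂) := by
      ext
      rw [NumberField.RingOfIntegers.coe_eq_algebraMap, map_pow]
      have hq' : (((q : ℕ) : 𝓞 K₂) : K₂) = ((q : ℕ) : K₂) :=
        map_natCast (algebraMap (𝓞 K₂) K₂) q
      rw [hq']
      exact ha₂
    have hα₃p : α₃ ^ p = z₃ * ((q : ℕ) : 𝓞 K₃) := by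
      ext
      rw [NumberField.RingOfIntegers.coe_eq_algebraMap, map_pow]
      have e1 : ((z₃ * ((q : ℕ) : 𝓞 K₃) : 𝓞 K₃) : K₃)
          = algebraMap (CyclotomicField p ℚ) K₃ ζ * ((q : ℕ) : K₃) := by
        have e2 := map_mul (algebraMap (𝓞 K₃) K₃) z₃ (((q : ℕ) : 𝓞 K₃))
        rw [map_natCast] at e2
        exact e2
      rw [e1]
      exact ha₃
    have hz₂prim : IsPrimitiveRoot (φ₂ z₂) p :=
      primroot_quot hp hs hsp φ₂ hsF₂
        (hζ.map_of_injective (algebraMap (CyclotomicField p ℚ) K₂).injective)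
    have hz₃prim : IsPrimitiveRoot (φ₃ z₃) p :=
      primroot_quot hp hs hsp φ₃ hsF₃
        (hζ.map_of_injective (algebraMap (CyclotomicField p ℚ) K₃).injective)
    haveI hc₂ : CharP (𝓞 K₂ ⧸ P₂) s := (CharP.charP_iff_prime_eq_zero hs).mpr hsF₂
    haveI hc₃ : CharP (𝓞 K₃ ⧸ P₃) s := (CharP.charP_iff_prime_eq_zero hs).mpr hsF₃
    have hq₂ : ((q : ℕ) : 𝓞 K₂ ⧸ P₂) ≠ 0 := by
      intro h0
      have hd := (CharP.cast_eq_zero_iff _ s q).mp h0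
      exact hsq ((Nat.prime_dvd_prime_iff_eq hs hq).mp hd)
    have hq₃ : ((q : ℕ) : 𝓞 K₃ ⧸ P₃) ≠ 0 := by
      intro h0
      have hd := (CharP.cast_eq_zero_iff _ s q).mp h0
      exact hsq ((Nat.prime_dvd_prime_iff_eq hs hq).mp hd)
    have hx₂ : (φ₂ α₂) ^ p = ((q : ℕ) : 𝓞 K₂ ⧸ P₂) := by
      rw [← map_pow, hα₂p, map_natCast]
    have hx₃ : (φ₃ α₃) ^ p = (φ₃ z₃) * ((q : ℕ) : 𝓞 K₃ ⧸ P₃) := by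
      rw [← map_pow, hα₃p, map_mul, map_natCast]
    have hdvd := part23 hp hs hcard₂ hcard₃ hpf₂ hpf₃ hsF₂ hsF₃ hz₂prim hz₃prim hx₂ hx₃ hq₂ hq₃
    exact hspow (conclude hp hs hpf₃ hdvd)
  exact ⟨fun h => noK₁ h.1, fun h => noK₁ h.1, no23⟩
end

section
/- Let r be a rational prime, r ∉ {2,5,41}. Consider the four pairs (1,1), (41,5), (-5,-1), (-205,-5) of integers. In the group (ℚ_r^×/ℚ_r^{×2})², the element (1,5) equals one of these four pairs. Consequently, the cocycle class (1,5) ∈ (ℚ^×/ℚ^{×2})² maps, at every finite place and the infinite place of ℚ, into the image of the local 2-torsion Kummer images {(1,1),(41,5),(-5,-1),(-205,-5)} of the curve y² = x(x+80)(x+205). -/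
/-- The pair `(1,5)` agrees, modulo squares (componentwise), with one of the four
pairs `(1,1)`, `(41,5)`, `(-5,-1)`, `(-205,-5)` in the field `F`; these four pairs
are the images of the 2-torsion points of `y² = x(x+80)(x+205)` under the local
Kummer (connecting) map. -/
def KummerMatch (F : Type*) [Field F] : Prop :=
  ∃ u v : F, u ≠ 0 ∧ v ≠ 0 ∧
    ((1 = u ^ 2 ∧ 5 = v ^ 2) ∨
     (1 = 41 * u ^ 2 ∧ 5 = 5 * v ^ 2) ∨
     (1 = -5 * u ^ 2 ∧ 5 = -v ^ 2) ∨
     (1 = -205 * u ^ 2 ∧ 5 = -5 * v ^ 2))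

section Helpers

variable {F : Type*} [Field F]

lemma km1 {y : F} (hy : y ≠ 0) (h : (5 : F) = y ^ 2) : KummerMatch F :=
  ⟨1, y, one_ne_zero, hy, Or.inl ⟨by ring, h⟩⟩

lemma km2 {y : F} (hy : y ≠ 0) (h : (41 : F) = y ^ 2) : KummerMatch F := by
  refine ⟨y⁻¹, 1, inv_ne_zero hy, one_ne_zero, Or.inr (Or.inl ⟨?_, by ring⟩)⟩
  rw [inv_pow, h, mul_inv_cancel₀ (pow_ne_zero 2 hy)]

lemma km3 {y : F} (hy : y ≠ 0) (h : (-5 : F) = y ^ 2) : KummerMatch F := by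
  refine ⟨y⁻¹, y, inv_ne_zero hy, hy, Or.inr (Or.inr (Or.inl ⟨?_, by rw [← h]; ring⟩))⟩
  rw [inv_pow, h, mul_inv_cancel₀ (pow_ne_zero 2 hy)]

lemma km4 {y z : F} (hy : y ≠ 0) (hz : z ≠ 0) (h1 : (-1 : F) = y ^ 2)
    (h2 : (-205 : F) = z ^ 2) : KummerMatch F := by
  refine ⟨z⁻¹, y, inv_ne_zero hz, hy, Or.inr (Or.inr (Or.inr ⟨?_, by rw [← h1]; ring⟩))⟩
  rw [inv_pow, h2, mul_inv_cancel₀ (pow_ne_zero 2 hz)]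

end Helpers

open Polynomial in
lemma padic_sqrt_aux {p : ℕ} [Fact p.Prime] (A a₀ : ℤ_[p]) (hA : A ≠ 0)
    (h : ‖a₀ ^ 2 - A‖ < ‖2 * a₀‖ ^ 2) :
    ∃ y : ℚ_[p], y ≠ 0 ∧ ((A : ℚ_[p]) = y ^ 2) := by
  have hFe : ∀ x : ℤ_[p], (X ^ 2 - C A : ℤ_[p][X]).eval x = x ^ 2 - A := by
    intro x; simp
  have hFd : (X ^ 2 - C A : ℤ_[p][X]).derivative.eval a₀ = 2 * a₀ := by
    simp [Polynomial.derivative_X_pow]; norm_num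
  have h' : ‖(X ^ 2 - C A : ℤ_[p][X]).eval a₀‖ <
      ‖(X ^ 2 - C A : ℤ_[p][X]).derivative.eval a₀‖ ^ 2 := by
    rw [hFe, hFd]; exact h
  obtain ⟨z, hz, -⟩ := hensels_lemma h'
  have hz2 : z ^ 2 = A := by
    have := hz
    rw [Polynomial.coe_aeval_eq_eval, hFe, sub_eq_zero] at this
    exact this
  have hzne : z ≠ 0 := by
    intro h0
    apply hA
    rw [← hz2, h0]; ring
  refine ⟨(z : ℚ_[p]), ?_, ?_⟩
  · exact PadicInt.coe_ne_zero.mpr hzne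
  · rw [← hz2]; push_cast; ring

lemma padic_sqrt_of_zmod {p : ℕ} [Fact p.Prime] (hp : p ≠ 2) (a : ℤ)
    (ha : ((a : ZMod p)) ≠ 0) (hsq : IsSquare ((a : ZMod p))) :
    ∃ y : ℚ_[p], y ≠ 0 ∧ ((a : ℚ_[p]) = y ^ 2) := by
  obtain ⟨b, hb⟩ := hsq
  have hbne : b ≠ 0 := by
    intro h0; apply ha; rw [hb, h0, mul_zero]
  have hdvd : ∀ x : ℤ_[p], (p : ℤ_[p]) ∣ x ↔ PadicInt.toZMod x = 0 := by
    intro x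
    rw [← Ideal.mem_span_singleton, ← PadicInt.maximalIdeal_eq_span_p,
      ← PadicInt.ker_toZMod, RingHom.mem_ker]
  set a₀ : ℤ_[p] := ((b.val : ℕ) : ℤ_[p]) with ha₀
  have htoz : PadicInt.toZMod a₀ = b := by
    rw [ha₀, map_natCast]
    exact ZMod.natCast_rightInverse b
  have h2ne : (2 : ZMod p) ≠ 0 := by
    intro h0
    have : (p : ℕ) ∣ 2 := by
      have := (ZMod.natCast_eq_zero_iff 2 p).mp (by exact_mod_cast h0)
      exact this
    exact hp ((Nat.prime_dvd_prime_iff_eq (Fact.out) Nat.prime_two).mp this)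
  have hAne : ((a : ℤ_[p])) ≠ 0 := by
    intro h0; apply ha
    have : PadicInt.toZMod ((a : ℤ_[p])) = 0 := by rw [h0, map_zero]
    rwa [map_intCast] at this
  have hkey : ‖a₀ ^ 2 - (a : ℤ_[p])‖ < ‖2 * a₀‖ ^ 2 := by
    have hnum : ‖a₀ ^ 2 - (a : ℤ_[p])‖ < 1 := by
      rw [PadicInt.norm_lt_one_iff_dvd, hdvd]
      simp [map_pow, htoz, map_intCast, ← hb, pow_two]
    have hden : ‖2 * a₀‖ = 1 := by
      have hle : ‖2 * a₀‖ ≤ 1 := PadicInt.norm_le_one _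
      rcases lt_or_eq_of_le hle with hlt | heq
      · exfalso
        rw [PadicInt.norm_lt_one_iff_dvd, hdvd] at hlt
        rw [map_mul, htoz] at hlt
        simp only [map_ofNat] at hlt
        exact mul_ne_zero h2ne hbne hlt
      · exact heq
    rw [hden]; simpa using hnum
  obtain ⟨y, hyne, hy⟩ := padic_sqrt_aux (a : ℤ_[p]) a₀ hAne hkey
  refine ⟨y, hyne, ?_⟩
  rw [← hy]; push_cast; ring

lemma zmod_nonsquare_mul {F : Type*} [Field F] [Fintype F] [DecidableEq F]
    (hF : ringChar F ≠ 2) {a b : F} (ha : a ≠ 0) (hb : b ≠ 0)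
    (hna : ¬IsSquare a) (hnb : ¬IsSquare b) : IsSquare (a * b) := by
  have h1 : quadraticChar F a = -1 := quadraticChar_neg_one_iff_not_isSquare.mpr hna
  have h2 : quadraticChar F b = -1 := quadraticChar_neg_one_iff_not_isSquare.mpr hnb
  have : quadraticChar F (a * b) = 1 := by rw [map_mul, h1, h2]; ring
  exact (quadraticChar_one_iff_isSquare (mul_ne_zero ha hb)).mp this

lemma prime_ne_zero_zmod {p q : ℕ} [Fact p.Prime] (hq : q.Prime) (hne : p ≠ q) :
    ((q : ℤ) : ZMod p) ≠ 0 := by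
  intro h0
  rw [ZMod.intCast_zmod_eq_zero_iff_dvd] at h0
  have : p ∣ q := by exact_mod_cast h0
  exact hne ((Nat.prime_dvd_prime_iff_eq Fact.out hq).mp this)

lemma zmod5_41_ne : ((41 : ℤ) : ZMod 5) ≠ 0 := by decide
lemma zmod5_41_sq : IsSquare ((41 : ℤ) : ZMod 5) := ⟨1, by decide⟩
lemma zmod41_5_ne : ((5 : ℤ) : ZMod 41) ≠ 0 := by decide
lemma zmod41_5_sq : IsSquare ((5 : ℤ) : ZMod 41) := ⟨13, by decide⟩

lemma km_padic (v : ℕ) [hv : Fact v.Prime] : KummerMatch ℚ_[v] := by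
  by_cases h2 : v = 2
  · subst h2
    -- √41 in ℚ_2 via Hensel at a₀ = 3
    obtain ⟨y, hyne, hy⟩ := padic_sqrt_aux (41 : ℤ_[2]) 3 (by
      intro h0
      have : ‖(41 : ℤ_[2])‖ < 1 := by rw [h0]; simp
      rw [show ((41:ℤ_[2])) = ((41:ℤ) : ℤ_[2]) by norm_cast,
        PadicInt.norm_int_lt_one_iff_dvd] at this
      norm_num at this) (by
      have h1 : ((3:ℤ_[2]) ^ 2 - 41) = ((-32 : ℤ) : ℤ_[2]) := by norm_num
      have h2 : ((2:ℤ_[2]) * 3) = ((6 : ℤ) : ℤ_[2]) := by norm_num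
      rw [h1, h2]
      have hnp : ‖(2 : ℤ_[2])‖ = (1/2 : ℝ) := by
        rw [show ((2:ℤ_[2])) = ((2:ℕ):ℤ_[2]) from by norm_cast, PadicInt.norm_p]
        norm_num
      have hn32 : ‖((-32 : ℤ) : ℤ_[2])‖ = (1/32 : ℝ) := by
        have e : ((-32 : ℤ) : ℤ_[2]) = -((2:ℤ_[2])^5) := by norm_num
        rw [e, norm_neg, norm_pow, hnp]
        norm_num
      have hn6 : ‖((6 : ℤ) : ℤ_[2])‖ = (1/2 : ℝ) := by
        have : ((6 : ℤ) : ℤ_[2]) = (2 : ℤ_[2]) * 3 := by norm_num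
        rw [this, norm_mul, hnp]
        have h3 : ‖(3 : ℤ_[2])‖ = 1 := by
          have hle : ‖(3:ℤ_[2])‖ ≤ 1 := PadicInt.norm_le_one _
          rcases lt_or_eq_of_le hle with hlt | heq
          · exfalso
            rw [show ((3:ℤ_[2])) = ((3:ℤ):ℤ_[2]) by norm_cast,
              PadicInt.norm_int_lt_one_iff_dvd] at hlt
            norm_num at hlt
          · exact heq
        rw [h3]; norm_num
      rw [hn32, hn6]; norm_num)
    exact km2 hyne (by rw [← hy]; norm_cast)
  by_cases h5 : v = 5
  · subst h5
    obtain ⟨y, hyne, hy⟩ := padic_sqrt_of_zmod (p := 5) (by norm_num) (41 : ℤ)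
      zmod5_41_ne zmod5_41_sq
    exact km2 hyne (by rw [← hy]; norm_cast)
  by_cases h41 : v = 41
  · subst h41
    obtain ⟨y, hyne, hy⟩ := padic_sqrt_of_zmod (p := 41) (by norm_num) (5 : ℤ)
      zmod41_5_ne zmod41_5_sq
    exact km1 hyne (by rw [← hy]; norm_cast)
  · -- general odd prime not 5, 41
    have hvodd : v ≠ 2 := h2
    have hv5 : ((5 : ℤ) : ZMod v) ≠ 0 := prime_ne_zero_zmod (by norm_num) h5
    have hv41 : ((41 : ℤ) : ZMod v) ≠ 0 := prime_ne_zero_zmod (by norm_num) h41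
    have hvm1 : ((-1 : ℤ) : ZMod v) ≠ 0 := by
      intro h0
      rw [ZMod.intCast_zmod_eq_zero_iff_dvd] at h0
      have h1 := Int.le_of_dvd (by norm_num) ((dvd_neg).mp h0)
      have h2 := hv.out.two_le
      omega
    have hvm5 : ((-5 : ℤ) : ZMod v) ≠ 0 := by
      intro h0; apply hv5
      have : ((-5 : ℤ) : ZMod v) = -((5:ℤ) : ZMod v) := by push_cast; ring
      rw [this] at h0
      exact neg_eq_zero.mp h0
    have hvm205 : ((-205 : ℤ) : ZMod v) ≠ 0 := by
      intro h0
      have : ((-205 : ℤ) : ZMod v) = ((-1:ℤ):ZMod v) * ((5:ℤ):ZMod v) * ((41:ℤ):ZMod v) := by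
        push_cast; ring
      rw [this] at h0
      rcases mul_eq_zero.mp h0 with h | h
      · rcases mul_eq_zero.mp h with h' | h'
        · exact hvm1 h'
        · exact hv5 h'
      · exact hv41 h
    have hchar : ringChar (ZMod v) ≠ 2 := by
      rw [ZMod.ringChar_zmod_n]; exact hvodd
    by_cases hs5 : IsSquare ((5 : ℤ) : ZMod v)
    · obtain ⟨y, hyne, hy⟩ := padic_sqrt_of_zmod hvodd 5 hv5 hs5
      exact km1 hyne (by rw [← hy]; norm_cast)
    by_cases hs41 : IsSquare ((41 : ℤ) : ZMod v)
    · obtain ⟨y, hyne, hy⟩ := padic_sqrt_of_zmod hvodd 41 hv41 hs41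
      exact km2 hyne (by rw [← hy]; norm_cast)
    by_cases hsm5 : IsSquare ((-5 : ℤ) : ZMod v)
    · obtain ⟨y, hyne, hy⟩ := padic_sqrt_of_zmod hvodd (-5) hvm5 hsm5
      exact km3 hyne (by rw [← hy]; push_cast; ring)
    · -- then -1 and -205 are squares
      have hsm1 : IsSquare ((-1 : ℤ) : ZMod v) := by
        by_contra hns
        apply hsm5
        have : ((-5 : ℤ) : ZMod v) = ((-1:ℤ):ZMod v) * ((5:ℤ):ZMod v) := by push_cast; ring
        rw [this]
        exact zmod_nonsquare_mul hchar hvm1 hv5 hns hs5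
      have hsm205 : IsSquare ((-205 : ℤ) : ZMod v) := by
        have : ((-205 : ℤ) : ZMod v) = ((-5:ℤ):ZMod v) * ((41:ℤ):ZMod v) := by push_cast; ring
        rw [this]
        exact zmod_nonsquare_mul hchar hvm5 hv41 hsm5 hs41
      obtain ⟨y, hyne, hy⟩ := padic_sqrt_of_zmod hvodd (-1) hvm1 hsm1
      obtain ⟨z, hzne, hz⟩ := padic_sqrt_of_zmod hvodd (-205) hvm205 hsm205
      exact km4 hyne hzne (by rw [← hy]; push_cast; ring) (by rw [← hz]; push_cast; ring)

/-- For every rational prime `r ∉ {2,5,41}`, the element `(1,5)` of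
`(ℚ_r^×/ℚ_r^{×2})²` equals one of the four pairs `(1,1)`, `(41,5)`, `(-5,-1)`,
`(-205,-5)`.  Consequently the class `(1,5)` matches one of these local Kummer
images at every finite place `v` of `ℚ` and at the infinite place. -/
theorem stmt_12 (r : ℕ) [Fact r.Prime] (hr : r ∉ ({2, 5, 41} : Set ℕ)) :
    KummerMatch ℚ_[r] ∧
      (∀ (v : ℕ) [Fact v.Prime], KummerMatch ℚ_[v]) ∧ KummerMatch ℝ := by
  refine ⟨km_padic r, fun v _ => km_padic v, ?_⟩
  exact km1 (F := ℝ) (y := Real.sqrt 5)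
    (by positivity) (by rw [sq, Real.mul_self_sqrt (by norm_num)])
end
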